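/- arXiv:1303.0529 — 3 statements merged into one kernel-verified Lean document; each statement's English description precedes it below -/
import Mathlib

section
/- Let X and Y be independent nonnegative random variables defined on the same probability space. Then E[ln(1 + X/(1 + Y))] = ∫₀^∞ (exp(-z)/z)·E[exp(-z·Y)]·(1 − E[exp(-z·X)]) dz, where both sides are interpreted as values in [0, ∞] (the integrand on the right-hand side is nonnegative for every z > 0). -/
open MeasureTheory Real Set

lemma int_exp_Ioi {t : ℝ} (ht : 0 < t) :
    ∫ z in Ioi (0:ℝ), Real.exp (-(t * z)) = 1 / t := by
  have := integral_comp_mul_left_Ioi (fun x => Real.exp (-x)) 0 ht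
  simp only [mul_zero, smul_eq_mul] at this
  rw [integral_exp_neg_Ioi_zero] at this
  simpa [one_div] using this

lemma int_exp_interval {a b z : ℝ} (hz : 0 < z) :
    ∫ t in a..b, Real.exp (-(t * z)) = (Real.exp (-(a*z)) - Real.exp (-(b*z))) / z := by
  have h : ∀ t : ℝ, Real.exp (-(t * z)) = Real.exp (t * (-z)) := by intro t; ring_nf
  simp_rw [h]
  have hne : (-z) ≠ 0 := by linarith
  rw [intervalIntegral.integral_comp_mul_right (fun x => Real.exp x) hne, integral_exp]
  field_simp
  ring_nf
  simp only [mul_comm z, mul_inv_cancel_right₀ hz.ne']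

lemma frullani {a b : ℝ} (ha : 0 < a) (hab : a ≤ b) :
    ∫⁻ z in Ioi (0:ℝ), ENNReal.ofReal ((Real.exp (-(a*z)) - Real.exp (-(b*z))) / z)
      = ENNReal.ofReal (Real.log (b / a)) := by
  have key : ∀ z ∈ Ioi (0:ℝ),
      ENNReal.ofReal ((Real.exp (-(a*z)) - Real.exp (-(b*z))) / z)
        = ∫⁻ t in Ioc a b, ENNReal.ofReal (Real.exp (-(t * z))) := by
    intro z hz
    rw [mem_Ioi] at hz
    have hint : IntegrableOn (fun t => Real.exp (-(t * z))) (Ioc a b) := by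
      apply (Continuous.integrableOn_Ioc (by continuity))
    rw [← ofReal_integral_eq_lintegral_ofReal hint
        (Filter.Eventually.of_forall fun t => (Real.exp_pos _).le),
      ← intervalIntegral.integral_of_le hab, int_exp_interval hz]
  rw [setLIntegral_congr_fun measurableSet_Ioi key]
  rw [lintegral_lintegral_swap]
  · have inner : ∀ t ∈ Ioc a b,
        ∫⁻ z in Ioi (0:ℝ), ENNReal.ofReal (Real.exp (-(t * z))) = ENNReal.ofReal (1 / t) := by
      intro t ht
      have htpos : 0 < t := lt_of_lt_of_le ha ht.1.le
      have hint : IntegrableOn (fun z => Real.exp (-(t * z))) (Ioi (0:ℝ)) := by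
        have := exp_neg_integrableOn_Ioi 0 htpos
        simpa [neg_mul] using this
      rw [← ofReal_integral_eq_lintegral_ofReal hint
        (Filter.Eventually.of_forall fun s => (Real.exp_pos _).le), int_exp_Ioi htpos]
    rw [setLIntegral_congr_fun measurableSet_Ioc inner]
    have hint : IntegrableOn (fun t : ℝ => 1 / t) (Ioc a b) := by
      have : IntervalIntegrable (fun t : ℝ => 1 / t) volume a b := by
        apply intervalIntegral.intervalIntegrable_one_div
        · intro x hx
          rw [uIcc_of_le hab] at hx
          exact (lt_of_lt_of_le ha hx.1).ne'
        · exact continuousOn_id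
      rw [intervalIntegrable_iff_integrableOn_Ioc_of_le hab] at this
      exact this
    have hnn : 0 ≤ᵐ[volume.restrict (Ioc a b)] fun t : ℝ => 1 / t :=
      (ae_restrict_mem measurableSet_Ioc).mono fun t ht =>
        le_of_lt (div_pos one_pos (lt_trans ha ht.1))
    rw [← ofReal_integral_eq_lintegral_ofReal hint hnn,
      ← intervalIntegral.integral_of_le hab, integral_one_div]
    rw [uIcc_of_le hab]; rintro ⟨h0, -⟩; linarith
  · apply Measurable.aemeasurable
    apply Measurable.ennreal_ofReal
    exact (measurable_snd.mul measurable_fst).neg.exp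

lemma pointwise_log {x y : ℝ} (hx : 0 ≤ x) (hy : 0 ≤ y) :
    ENNReal.ofReal (Real.log (1 + x / (1 + y)))
      = ∫⁻ z in Ioi (0:ℝ), ENNReal.ofReal
          ((Real.exp (-z) / z) * Real.exp (-(z * y)) * (1 - Real.exp (-(z * x)))) := by
  have ha : (0:ℝ) < 1 + y := by linarith
  have hab : 1 + y ≤ 1 + x + y := by linarith
  have hlog : Real.log (1 + x / (1 + y)) = Real.log ((1 + x + y) / (1 + y)) := by
    congr 1; field_simp; ring
  rw [hlog, ← frullani ha hab]
  apply setLIntegral_congr_fun measurableSet_Ioi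
  intro z hz
  beta_reduce
  rw [mem_Ioi] at hz
  congr 1
  rw [show -((1 + y) * z) = -z + -(z * y) by ring, Real.exp_add,
    show -((1 + x + y) * z) = (-z + -(z * y)) + -(z * x) by ring, Real.exp_add, Real.exp_add]
  field_simp

/-- Hamdi's lemma (N = M = 1), independent form: if the nonnegative random variables `X`, `Y`
are independent, then
`E[ln(1 + X/(1+Y))] = ∫₀^∞ (e^{-z}/z) E[e^{-zY}] (1 - E[e^{-zX}]) dz`,
both sides interpreted in `[0, ∞]`. -/
theorem average_rate_mgf_identity_indep
    {Ω : Type*} [MeasurableSpace Ω] (μ : Measure Ω) [IsProbabilityMeasure μ]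
    (X Y : Ω → ℝ) (hX : Measurable X) (hY : Measurable Y)
    (hXnn : ∀ ω, 0 ≤ X ω) (hYnn : ∀ ω, 0 ≤ Y ω)
    (hindep : ProbabilityTheory.IndepFun X Y μ) :
    ∫⁻ ω, ENNReal.ofReal (Real.log (1 + X ω / (1 + Y ω))) ∂μ
      = ∫⁻ z in Ioi (0 : ℝ),
          ENNReal.ofReal ((Real.exp (-z) / z) *
            (∫ ω, Real.exp (-(z * Y ω)) ∂μ) *
            (1 - (∫ ω, Real.exp (-(z * X ω)) ∂μ))) := by
  have step1 : ∫⁻ ω, ENNReal.ofReal (Real.log (1 + X ω / (1 + Y ω))) ∂μ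
      = ∫⁻ ω, (∫⁻ z in Ioi (0:ℝ), ENNReal.ofReal
          ((Real.exp (-z) / z) * Real.exp (-(z * Y ω)) * (1 - Real.exp (-(z * X ω))))) ∂μ :=
    lintegral_congr fun ω => pointwise_log (hXnn ω) (hYnn ω)
  rw [step1, lintegral_lintegral_swap]
  · apply setLIntegral_congr_fun measurableSet_Ioi
    intro z hz
    beta_reduce
    rw [mem_Ioi] at hz
    set c : ℝ := Real.exp (-z) / z with hc
    have hcnn : 0 ≤ c := div_nonneg (Real.exp_pos _).le hz.le
    set g : Ω → ℝ := fun ω => Real.exp (-(z * Y ω)) * (1 - Real.exp (-(z * X ω))) with hg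
    have hgle : ∀ ω, Real.exp (-(z * X ω)) ≤ 1 := fun ω =>
      Real.exp_le_one_iff.mpr (neg_nonpos.mpr (mul_nonneg hz.le (hXnn ω)))
    have hgnn : ∀ ω, 0 ≤ g ω := fun ω =>
      mul_nonneg (Real.exp_pos _).le (by linarith [hgle ω])
    have hgmeas : Measurable g :=
      ((hY.const_mul z).neg.exp).mul (measurable_const.sub (hX.const_mul z).neg.exp)
    have hgbdd : ∀ ω, ‖g ω‖ ≤ 1 := by
      intro ω
      rw [Real.norm_eq_abs, abs_of_nonneg (hgnn ω)]
      have h1 : Real.exp (-(z * Y ω)) ≤ 1 :=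
        Real.exp_le_one_iff.mpr (neg_nonpos.mpr (mul_nonneg hz.le (hYnn ω)))
      have h2 : 1 - Real.exp (-(z * X ω)) ≤ 1 := by
        linarith [(Real.exp_pos (-(z * X ω))).le]
      calc g ω ≤ 1 * (1 - Real.exp (-(z * X ω))) := by
            apply mul_le_mul_of_nonneg_right h1; linarith [hgle ω]
        _ ≤ 1 := by simpa using h2
    have hgint : Integrable g μ :=
      (integrable_const (1:ℝ)).mono' hgmeas.aestronglyMeasurable
        (Filter.Eventually.of_forall hgbdd)
    have key : ∫⁻ ω, ENNReal.ofReal (c * g ω) ∂μ = ENNReal.ofReal (c * ∫ ω, g ω ∂μ) := by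
      simp_rw [ENNReal.ofReal_mul hcnn]
      rw [lintegral_const_mul' _ _ ENNReal.ofReal_ne_top,
        ← ofReal_integral_eq_lintegral_ofReal hgint (Filter.Eventually.of_forall hgnn)]
    have hsimp : ∀ ω, ENNReal.ofReal (c * Real.exp (-(z * Y ω)) * (1 - Real.exp (-(z * X ω))))
        = ENNReal.ofReal (c * g ω) := fun ω => by rw [hg]; ring_nf
    simp_rw [hsimp]
    rw [key]
    -- independence
    have hindYX := hindep.symm.comp (φ := fun y => Real.exp (-(z * y)))
      (ψ := fun x => 1 - Real.exp (-(z * x)))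
      ((measurable_id.const_mul z).neg.exp)
      (measurable_const.sub (measurable_id.const_mul z).neg.exp)
    have hmul : ∫ ω, g ω ∂μ
        = (∫ ω, Real.exp (-(z * Y ω)) ∂μ) * (∫ ω, (1 - Real.exp (-(z * X ω))) ∂μ) := by
      have := hindYX.integral_fun_mul_eq_mul_integral (((hY.const_mul z).neg.exp).aestronglyMeasurable)
        ((measurable_const.sub (hX.const_mul z).neg.exp).aestronglyMeasurable)
      simpa [Function.comp] using this
    have hXint : Integrable (fun ω => Real.exp (-(z * X ω))) μ := by
      apply (integrable_const (1:ℝ)).mono'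
        (((hX.const_mul z).neg.exp).aestronglyMeasurable)
      apply Filter.Eventually.of_forall
      intro ω
      rw [Real.norm_eq_abs, abs_of_nonneg (Real.exp_pos _).le]
      exact hgle ω
    have hsub : ∫ ω, (1 - Real.exp (-(z * X ω))) ∂μ
        = 1 - ∫ ω, Real.exp (-(z * X ω)) ∂μ := by
      rw [integral_sub (integrable_const 1) hXint, integral_const]
      simp
    rw [hmul, hsub, mul_assoc]
  · apply Measurable.aemeasurable
    apply Measurable.ennreal_ofReal
    apply Measurable.mul
    apply Measurable.mul
    · exact (measurable_snd.neg.exp.div measurable_snd)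
    · exact ((measurable_snd.mul (hY.comp measurable_fst)).neg.exp)
    · exact measurable_const.sub ((measurable_snd.mul (hX.comp measurable_fst)).neg.exp)
end

section
/- (Remark 0 / equation (9A).) Fix α > 2 and SNR > 0. Let X and g be nonnegative random variables with X integrable and E[g^{2/α}] < ∞. Set M₀(z) = E[exp(-z·X)], M_I(z) = E[exp(-z·g)], T_I(z) = z^{2/α}·E[g^{2/α}·γ(1 − 2/α, z·g)], and Z_I(z) = M_I(z) + T_I(z) > 0. For λ > 0 define the average rate R(λ) = ∫₀^∞ (1 − M₀(SNR·y))·(G_I(y, λ)/y) dy, where G_I(y, λ) = Z_I(SNR·y)^{-1} − (α/2)·(y/Z_I(SNR·y))·∫₀^∞ ξ^{α/2−1}·exp(-π·λ·Z_I(SNR·y)·ξ)·exp(-y·ξ^{α/2}) dξ (all integrals valued in [0, ∞]). Then: (i) λ ↦ R(λ) is monotonically nondecreasing on (0, ∞); (ii) for every λ > 0, R(λ) ≤ R^{(λ∞)} := ∫₀^∞ (1 − M₀(z))/(z·Z_I(z)) dz; and (iii) lim_{λ→∞} R(λ) = R^{(λ∞)} (equality in [0, ∞]). In particular, the limiting value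 R^{(λ∞)} does not depend on λ and, after the change of variable z = SNR·y, is independent of the base-station density. -/
set_option maxHeartbeats 1000000


open MeasureTheory Real Set Filter
open scoped ENNReal Topology

/-- The lower incomplete gamma function `γ(a, x) = ∫₀^x t^{a-1} e^{-t} dt`. -/
noncomputable def lowerGamma (a x : ℝ) : ℝ :=
  ∫ t in Set.Ioc (0 : ℝ) x, t ^ (a - 1) * Real.exp (-t)

lemma lowerGamma_integrableOn {c : ℝ} (hc : 0 < c) (x : ℝ) :
    MeasureTheory.IntegrableOn (fun t : ℝ => t ^ (c - 1) * Real.exp (-t)) (Set.Ioc 0 x) := by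
  have h2 : MeasureTheory.IntegrableOn
      (fun t : ℝ => t ^ (c - 1) * Real.exp (-t)) (Set.Ioi 0) :=
    (Real.GammaIntegral_convergent hc).congr_fun (fun t _ => mul_comm _ _) measurableSet_Ioi
  exact h2.mono_set Set.Ioc_subset_Ioi_self

lemma lowerGamma_mono {c : ℝ} (hc : 0 < c) : Monotone (lowerGamma c) := by
  intro x y hxy
  unfold lowerGamma
  refine setIntegral_mono_set (lowerGamma_integrableOn hc y) ?_ ?_
  · refine (ae_restrict_iff' measurableSet_Ioc).2 (Filter.Eventually.of_forall fun t ht => ?_)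
    exact mul_nonneg (Real.rpow_nonneg ht.1.le _) (Real.exp_pos _).le
  · exact HasSubset.Subset.eventuallyLE (Set.Ioc_subset_Ioc_right hxy)

lemma measurable_lowerGamma {c : ℝ} (hc : 0 < c) : Measurable (lowerGamma c) :=
  (lowerGamma_mono hc).measurable

/-- Remark 0 / equation (9A): the single-tier average rate `R(λ)` is nondecreasing in the
base-station density `λ`, is bounded above by `R^{(λ∞)} = ∫₀^∞ (1 - M₀(z))/(z Z_I(z)) dz`,
and tends to this bound as `λ → ∞`. -/
theorem average_rate_monotone_and_dense_limit
    {Ω : Type*} [MeasurableSpace Ω] (μ : Measure Ω) [IsProbabilityMeasure μ]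
    (α SNR : ℝ) (hα : 2 < α) (hSNR : 0 < SNR)
    (X g : Ω → ℝ) (hX : Measurable X) (hg : Measurable g)
    (hXnn : ∀ ω, 0 ≤ X ω) (hgnn : ∀ ω, 0 ≤ g ω)
    (hXint : Integrable X μ) (hgint : Integrable (fun ω => g ω ^ (2 / α)) μ)
    (M₀ MI TI ZI : ℝ → ℝ)
    (hM₀ : ∀ z, M₀ z = ∫ ω, Real.exp (-(z * X ω)) ∂μ)
    (hMI : ∀ z, MI z = ∫ ω, Real.exp (-(z * g ω)) ∂μ)
    (hTI : ∀ z, TI z = z ^ (2 / α) * ∫ ω, g ω ^ (2 / α) * lowerGamma (1 - 2 / α) (z * g ω) ∂μ)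
    (hZI : ∀ z, ZI z = MI z + TI z)
    (hZpos : ∀ z, 0 < ZI z)
    (GI : ℝ → ℝ → ℝ)
    (hGI : ∀ y lam, GI y lam = (ZI (SNR * y))⁻¹ - (α / 2) * (y / ZI (SNR * y)) *
        ∫ ξ in Set.Ioi (0 : ℝ),
          ξ ^ (α / 2 - 1) * Real.exp (-(π * lam * ZI (SNR * y) * ξ)) *
            Real.exp (-(y * ξ ^ (α / 2))))
    (R : ℝ → ℝ≥0∞)
    (hR : ∀ lam, R lam = ∫⁻ y in Set.Ioi (0 : ℝ),
        ENNReal.ofReal ((1 - M₀ (SNR * y)) * (GI y lam / y))) :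
    (∀ lam₁ lam₂ : ℝ, 0 < lam₁ → lam₁ ≤ lam₂ → R lam₁ ≤ R lam₂)
    ∧ (∀ lam : ℝ, 0 < lam →
        R lam ≤ ∫⁻ z in Set.Ioi (0 : ℝ), ENNReal.ofReal ((1 - M₀ z) / (z * ZI z)))
    ∧ Tendsto R atTop
        (nhds (∫⁻ z in Set.Ioi (0 : ℝ), ENNReal.ofReal ((1 - M₀ z) / (z * ZI z)))) := by
  have hα0 : (0:ℝ) < α := by linarith
  have hrm : ∀ c : ℝ, 0 ≤ c → Measurable fun x : ℝ => x ^ c :=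
    fun c hc => (Real.continuous_rpow_const hc).measurable
  have ha1 : (0:ℝ) < 1 - 2 / α := by
    have : 2 / α < 1 := (div_lt_one hα0).2 hα
    linarith
  -- measurability of the MGF-type functions
  have hmM₀ : Measurable M₀ := by
    rw [funext hM₀]
    exact (Measurable.stronglyMeasurable
      ((measurable_fst.mul (hX.comp measurable_snd)).neg.exp :
        Measurable fun q : ℝ × Ω => Real.exp (-(q.1 * X q.2)))).integral_prod_right'.measurable
  have hmMI : Measurable MI := by
    rw [funext hMI]
    exact (Measurable.stronglyMeasurable
      ((measurable_fst.mul (hg.comp measurable_snd)).neg.exp :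
        Measurable fun q : ℝ × Ω => Real.exp (-(q.1 * g q.2)))).integral_prod_right'.measurable
  have hmTI : Measurable TI := by
    rw [funext hTI]
    have hj : Measurable fun q : ℝ × Ω =>
        g q.2 ^ (2 / α) * lowerGamma (1 - 2 / α) (q.1 * g q.2) :=
      ((hrm _ (by positivity)).comp (hg.comp measurable_snd)).mul
        ((measurable_lowerGamma ha1).comp (measurable_fst.mul (hg.comp measurable_snd)))
    exact ((hrm _ (by positivity)).mul hj.stronglyMeasurable.integral_prod_right'.measurable)
  have hmZI : Measurable ZI := by
    rw [funext hZI]; exact hmMI.add hmTI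
  have hmZy : Measurable fun y : ℝ => ZI (SNR * y) := hmZI.comp (measurable_id.const_mul SNR)
  -- measurability of the inner ξ-integral and of GI
  have hmK : ∀ lam : ℝ, Measurable fun q : ℝ × ℝ =>
      q.2 ^ (α / 2 - 1) * Real.exp (-(π * lam * ZI (SNR * q.1) * q.2)) *
        Real.exp (-(q.1 * q.2 ^ (α / 2))) := by
    intro lam
    have e1 : (0:ℝ) ≤ α / 2 - 1 := by linarith
    have e2 : (0:ℝ) ≤ α / 2 := by linarith
    exact (((hrm _ e1).comp measurable_snd).mul
        ((((hmZy.comp measurable_fst).const_mul (π * lam)).mul measurable_snd).neg.exp)).mul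
      ((measurable_fst.mul ((hrm _ e2).comp measurable_snd)).neg.exp)
  have hmJ : ∀ lam : ℝ, Measurable fun y : ℝ => ∫ ξ in Set.Ioi (0:ℝ),
      ξ ^ (α / 2 - 1) * Real.exp (-(π * lam * ZI (SNR * y) * ξ)) *
        Real.exp (-(y * ξ ^ (α / 2))) := by
    intro lam
    exact ((hmK lam).stronglyMeasurable.integral_prod_right').measurable
  have hmGI : ∀ lam : ℝ, Measurable fun y : ℝ => GI y lam := by
    intro lam
    have h : (fun y : ℝ => GI y lam) = fun y =>
        (ZI (SNR * y))⁻¹ - (α / 2) * (y / ZI (SNR * y)) *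
          ∫ ξ in Set.Ioi (0:ℝ), ξ ^ (α / 2 - 1) *
            Real.exp (-(π * lam * ZI (SNR * y) * ξ)) * Real.exp (-(y * ξ ^ (α / 2))) :=
      funext fun y => hGI y lam
    rw [h]
    exact hmZy.inv.sub ((((measurable_id.div hmZy).const_mul (α/2)).mul (hmJ lam)))
  have hmInt : ∀ lam : ℝ, Measurable fun y : ℝ =>
      ENNReal.ofReal ((1 - M₀ (SNR * y)) * (GI y lam / y)) := by
    intro lam
    exact ENNReal.measurable_ofReal.comp
      (((measurable_const.sub (hmM₀.comp (measurable_id.const_mul SNR))).mul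
        ((hmGI lam).div measurable_id)))
  -- basic pointwise facts
  have hM₀le : ∀ z : ℝ, 0 ≤ z → M₀ z ≤ 1 := by
    intro z hz
    rw [hM₀]
    calc (∫ ω, Real.exp (-(z * X ω)) ∂μ) ≤ ∫ _, (1:ℝ) ∂μ := by
          refine integral_mono_of_nonneg (Filter.Eventually.of_forall fun ω => (Real.exp_pos _).le)
            (integrable_const 1) (Filter.Eventually.of_forall fun ω => ?_)
          exact Real.exp_le_one_iff.2 (neg_nonpos.2 (mul_nonneg hz (hXnn ω)))
      _ = 1 := by simp
  have hKnonneg : ∀ y lam : ℝ, (0:ℝ) ≤ ∫ ξ in Set.Ioi (0:ℝ),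
      ξ ^ (α / 2 - 1) * Real.exp (-(π * lam * ZI (SNR * y) * ξ)) *
        Real.exp (-(y * ξ ^ (α / 2))) := by
    intro y lam
    refine setIntegral_nonneg measurableSet_Ioi fun ξ hξ => ?_
    exact mul_nonneg (mul_nonneg (Real.rpow_nonneg (le_of_lt hξ) _) (Real.exp_pos _).le)
      (Real.exp_pos _).le
  have hKint : ∀ y lam : ℝ, 0 ≤ y → 0 < lam → IntegrableOn
      (fun ξ : ℝ => ξ ^ (α / 2 - 1) * Real.exp (-(π * lam * ZI (SNR * y) * ξ)) *
        Real.exp (-(y * ξ ^ (α / 2)))) (Set.Ioi 0) := by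
    intro y lam hy hlam
    have hZ := hZpos (SNR * y)
    have hb : 0 < π * lam * ZI (SNR * y) := by positivity
    have hdom : IntegrableOn
        (fun ξ : ℝ => ξ ^ (α / 2 - 1) * Real.exp (-(π * lam * ZI (SNR * y)) * ξ ^ (1:ℝ)))
        (Set.Ioi 0) := integrableOn_rpow_mul_exp_neg_mul_rpow (by linarith) one_pos hb
    refine Integrable.mono' hdom
      (((hmK lam).comp (measurable_prodMk_left (x := y))).aestronglyMeasurable) ?_
    refine (ae_restrict_iff' measurableSet_Ioi).2 (Filter.Eventually.of_forall fun ξ hξ => ?_)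
    have hξ0 : (0:ℝ) < ξ := hξ
    have h1 : (0:ℝ) ≤ ξ ^ (α / 2 - 1) * Real.exp (-(π * lam * ZI (SNR * y) * ξ)) *
        Real.exp (-(y * ξ ^ (α / 2))) :=
      mul_nonneg (mul_nonneg (Real.rpow_nonneg hξ0.le _) (Real.exp_pos _).le) (Real.exp_pos _).le
    rw [Real.norm_eq_abs, abs_of_nonneg h1, Real.rpow_one]
    have h2 : Real.exp (-(y * ξ ^ (α / 2))) ≤ 1 :=
      Real.exp_le_one_iff.2 (neg_nonpos.2 (mul_nonneg hy (Real.rpow_nonneg hξ0.le _)))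
    calc ξ ^ (α / 2 - 1) * Real.exp (-(π * lam * ZI (SNR * y) * ξ)) *
          Real.exp (-(y * ξ ^ (α / 2)))
        ≤ ξ ^ (α / 2 - 1) * Real.exp (-(π * lam * ZI (SNR * y) * ξ)) * 1 := by
          refine mul_le_mul_of_nonneg_left h2 ?_
          exact mul_nonneg (Real.rpow_nonneg hξ0.le _) (Real.exp_pos _).le
      _ = ξ ^ (α / 2 - 1) * (Real.exp (-(π * lam * ZI (SNR * y)) * ξ)) := by
          rw [mul_one]; ring_nf
  have hKanti : ∀ y lam₁ lam₂ : ℝ, 0 ≤ y → 0 < lam₁ → lam₁ ≤ lam₂ →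
      (∫ ξ in Set.Ioi (0:ℝ), ξ ^ (α / 2 - 1) *
          Real.exp (-(π * lam₂ * ZI (SNR * y) * ξ)) * Real.exp (-(y * ξ ^ (α / 2))))
      ≤ ∫ ξ in Set.Ioi (0:ℝ), ξ ^ (α / 2 - 1) *
          Real.exp (-(π * lam₁ * ZI (SNR * y) * ξ)) * Real.exp (-(y * ξ ^ (α / 2))) := by
    intro y l1 l2 hy h1 h12
    have hZ := hZpos (SNR * y)
    refine setIntegral_mono_on (hKint y l2 hy (lt_of_lt_of_le h1 h12)) (hKint y l1 hy h1)
      measurableSet_Ioi fun ξ hξ => ?_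
    have hξ0 : (0:ℝ) < ξ := hξ
    have hexp : Real.exp (-(π * l2 * ZI (SNR * y) * ξ)) ≤
        Real.exp (-(π * l1 * ZI (SNR * y) * ξ)) := by
      apply Real.exp_le_exp.2
      nlinarith [mul_pos (mul_pos Real.pi_pos hZ) hξ0]
    exact mul_le_mul_of_nonneg_right
      (mul_le_mul_of_nonneg_left hexp (Real.rpow_nonneg hξ0.le _)) (Real.exp_pos _).le
  have hKlim : ∀ y : ℝ, 0 ≤ y → Tendsto (fun n : ℕ => ∫ ξ in Set.Ioi (0:ℝ),
      ξ ^ (α / 2 - 1) * Real.exp (-(π * ((n:ℝ)+1) * ZI (SNR * y) * ξ)) *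
        Real.exp (-(y * ξ ^ (α / 2)))) atTop (𝓝 0) := by
    intro y hy
    have hZ := hZpos (SNR * y)
    have key := tendsto_integral_of_dominated_convergence
      (μ := volume.restrict (Set.Ioi (0:ℝ)))
      (F := fun (n : ℕ) (ξ : ℝ) => ξ ^ (α / 2 - 1) *
        Real.exp (-(π * ((n:ℝ)+1) * ZI (SNR * y) * ξ)) * Real.exp (-(y * ξ ^ (α / 2))))
      (f := fun _ => (0:ℝ))
      (fun ξ => ξ ^ (α / 2 - 1) * Real.exp (-(π * 1 * ZI (SNR * y) * ξ)) *
        Real.exp (-(y * ξ ^ (α / 2))))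
      (fun n => ((hmK ((n:ℝ)+1)).comp (measurable_prodMk_left (x := y))).aestronglyMeasurable)
      (hKint y 1 hy one_pos) ?_ ?_
    · simpa using key
    · intro n
      refine (ae_restrict_iff' measurableSet_Ioi).2 (Filter.Eventually.of_forall fun ξ hξ => ?_)
      have hξ0 : (0:ℝ) < ξ := hξ
      have h1 : (0:ℝ) ≤ ξ ^ (α / 2 - 1) * Real.exp (-(π * ((n:ℝ)+1) * ZI (SNR * y) * ξ)) *
          Real.exp (-(y * ξ ^ (α / 2))) :=
        mul_nonneg (mul_nonneg (Real.rpow_nonneg hξ0.le _) (Real.exp_pos _).le)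
          (Real.exp_pos _).le
      rw [Real.norm_eq_abs, abs_of_nonneg h1]
      have hn1 : (1:ℝ) ≤ (n:ℝ) + 1 := by
        have := Nat.cast_nonneg (α := ℝ) n
        linarith
      have hexp : Real.exp (-(π * ((n:ℝ)+1) * ZI (SNR * y) * ξ)) ≤
          Real.exp (-(π * 1 * ZI (SNR * y) * ξ)) := by
        apply Real.exp_le_exp.2
        nlinarith [mul_pos (mul_pos Real.pi_pos hZ) hξ0]
      exact mul_le_mul_of_nonneg_right
        (mul_le_mul_of_nonneg_left hexp (Real.rpow_nonneg hξ0.le _)) (Real.exp_pos _).le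
    · refine (ae_restrict_iff' measurableSet_Ioi).2 (Filter.Eventually.of_forall fun ξ hξ => ?_)
      have hξ0 : (0:ℝ) < ξ := hξ
      have hc : 0 < π * ZI (SNR * y) * ξ := by positivity
      have h1 : Tendsto (fun n : ℕ => (π * ZI (SNR * y) * ξ) * ((n:ℝ)+1)) atTop atTop :=
        (tendsto_atTop_add_const_right atTop 1 (tendsto_natCast_atTop_atTop (R := ℝ))).const_mul_atTop hc
      have h2 : Tendsto (fun n : ℕ => Real.exp (-(π * ((n:ℝ)+1) * ZI (SNR * y) * ξ)))
          atTop (𝓝 0) := by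
        have h3 := Real.tendsto_exp_atBot.comp ((tendsto_neg_atTop_atBot (G := ℝ)).comp h1)
        refine h3.congr fun n => ?_
        simp only [Function.comp]
        ring_nf
      have h4 := (h2.const_mul (ξ ^ (α / 2 - 1))).mul_const (Real.exp (-(y * ξ ^ (α / 2))))
      simpa using h4
  -- pointwise facts about GI
  have hGIle : ∀ y lam : ℝ, 0 < y → GI y lam ≤ (ZI (SNR * y))⁻¹ := by
    intro y lam hy
    rw [hGI]
    have hZ := hZpos (SNR * y)
    refine sub_le_self _ ?_
    exact mul_nonneg (mul_nonneg (by linarith) (div_nonneg hy.le hZ.le)) (hKnonneg y lam)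
  have hGImono : ∀ y lam₁ lam₂ : ℝ, 0 < y → 0 < lam₁ → lam₁ ≤ lam₂ →
      GI y lam₁ ≤ GI y lam₂ := by
    intro y l1 l2 hy h1 h12
    rw [hGI, hGI]
    have hZ := hZpos (SNR * y)
    refine sub_le_sub_left ?_ _
    exact mul_le_mul_of_nonneg_left (hKanti y l1 l2 hy.le h1 h12)
      (mul_nonneg (by linarith) (div_nonneg hy.le hZ.le))
  have hGItend : ∀ y : ℝ, 0 < y →
      Tendsto (fun n : ℕ => GI y ((n:ℝ)+1)) atTop (𝓝 ((ZI (SNR * y))⁻¹)) := by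
    intro y hy
    have h : (fun n : ℕ => GI y ((n:ℝ)+1)) = fun n : ℕ =>
        (ZI (SNR * y))⁻¹ - (α / 2) * (y / ZI (SNR * y)) *
          ∫ ξ in Set.Ioi (0:ℝ), ξ ^ (α / 2 - 1) *
            Real.exp (-(π * ((n:ℝ)+1) * ZI (SNR * y) * ξ)) * Real.exp (-(y * ξ ^ (α / 2))) :=
      funext fun n : ℕ => hGI y ((n:ℝ)+1)
    rw [h]
    have h2 := (tendsto_const_nhds (x := (ZI (SNR * y))⁻¹) (f := (atTop : Filter ℕ))).sub
      ((hKlim y hy.le).const_mul ((α / 2) * (y / ZI (SNR * y))))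
    simpa using h2
  -- pointwise integrand facts
  have hIntMono : ∀ y lam₁ lam₂ : ℝ, 0 < y → 0 < lam₁ → lam₁ ≤ lam₂ →
      ENNReal.ofReal ((1 - M₀ (SNR * y)) * (GI y lam₁ / y)) ≤
        ENNReal.ofReal ((1 - M₀ (SNR * y)) * (GI y lam₂ / y)) := by
    intro y l1 l2 hy h1 h12
    have h1M : 0 ≤ 1 - M₀ (SNR * y) := sub_nonneg.2 (hM₀le _ (by positivity))
    refine ENNReal.ofReal_le_ofReal (mul_le_mul_of_nonneg_left ?_ h1M)
    exact (div_le_div_iff_of_pos_right hy).2 (hGImono y l1 l2 hy h1 h12)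
  have hIntBound : ∀ y lam : ℝ, 0 < y →
      ENNReal.ofReal ((1 - M₀ (SNR * y)) * (GI y lam / y)) ≤
        ENNReal.ofReal ((1 - M₀ (SNR * y)) * ((ZI (SNR * y))⁻¹ / y)) := by
    intro y lam hy
    have h1M : 0 ≤ 1 - M₀ (SNR * y) := sub_nonneg.2 (hM₀le _ (by positivity))
    refine ENNReal.ofReal_le_ofReal (mul_le_mul_of_nonneg_left ?_ h1M)
    exact (div_le_div_iff_of_pos_right hy).2 (hGIle y lam hy)
  -- change of variables: the y-form of the limit equals the z-form
  have hsub : (∫⁻ y in Set.Ioi (0:ℝ),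
        ENNReal.ofReal ((1 - M₀ (SNR * y)) * ((ZI (SNR * y))⁻¹ / y)))
      = ∫⁻ z in Set.Ioi (0:ℝ), ENNReal.ofReal ((1 - M₀ z) / (z * ZI z)) := by
    have he : MeasurableEmbedding (fun y : ℝ => SNR * y) :=
      (Homeomorph.mulLeft₀ SNR hSNR.ne').measurableEmbedding
    have hpre : (fun y : ℝ => SNR * y) ⁻¹' Set.Ioi 0 = Set.Ioi (0:ℝ) := by
      ext y
      simp only [Set.mem_preimage, Set.mem_Ioi]
      exact mul_pos_iff_of_pos_left hSNR
    have hmap : Measure.map (fun y : ℝ => SNR * y) (volume.restrict (Set.Ioi 0)) =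
        ENNReal.ofReal SNR⁻¹ • volume.restrict (Set.Ioi (0:ℝ)) := by
      conv_lhs => rw [show volume.restrict (Set.Ioi (0:ℝ)) =
        volume.restrict ((fun y : ℝ => SNR * y) ⁻¹' Set.Ioi 0) from by rw [hpre]]
      rw [← Measure.restrict_map he.measurable measurableSet_Ioi,
        Real.map_volume_mul_left hSNR.ne', Measure.restrict_smul,
        abs_of_pos (inv_pos.2 hSNR)]
    calc (∫⁻ y in Set.Ioi (0:ℝ),
          ENNReal.ofReal ((1 - M₀ (SNR * y)) * ((ZI (SNR * y))⁻¹ / y)))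
        = ∫⁻ y in Set.Ioi (0:ℝ), ENNReal.ofReal SNR *
            ENNReal.ofReal ((1 - M₀ (SNR * y)) / ((SNR * y) * ZI (SNR * y))) := by
          refine setLIntegral_congr_fun measurableSet_Ioi
            (fun y hy => ?_)
          have hZ := hZpos (SNR * y)
          rw [← ENNReal.ofReal_mul hSNR.le]
          congr 1
          have hy0 : y ≠ 0 := ne_of_gt hy
          field_simp
      _ = ENNReal.ofReal SNR * ∫⁻ y in Set.Ioi (0:ℝ),
            ENNReal.ofReal ((1 - M₀ (SNR * y)) / ((SNR * y) * ZI (SNR * y))) :=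
          lintegral_const_mul' _ _ ENNReal.ofReal_ne_top
      _ = ENNReal.ofReal SNR * ∫⁻ z, ENNReal.ofReal ((1 - M₀ z) / (z * ZI z))
            ∂(Measure.map (fun y : ℝ => SNR * y) (volume.restrict (Set.Ioi 0))) := by
          rw [he.lintegral_map]
      _ = ENNReal.ofReal SNR * (ENNReal.ofReal SNR⁻¹ *
            ∫⁻ z in Set.Ioi (0:ℝ), ENNReal.ofReal ((1 - M₀ z) / (z * ZI z))) := by
          rw [hmap, lintegral_smul_measure, smul_eq_mul]
      _ = ∫⁻ z in Set.Ioi (0:ℝ), ENNReal.ofReal ((1 - M₀ z) / (z * ZI z)) := by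
          rw [← mul_assoc, ← ENNReal.ofReal_mul hSNR.le, mul_inv_cancel₀ hSNR.ne',
            ENNReal.ofReal_one, one_mul]
  -- the three claims
  have hmono : ∀ lam₁ lam₂ : ℝ, 0 < lam₁ → lam₁ ≤ lam₂ → R lam₁ ≤ R lam₂ := by
    intro l1 l2 h1 h12
    rw [hR l1, hR l2]
    refine lintegral_mono_ae ?_
    filter_upwards [ae_restrict_mem measurableSet_Ioi] with y hy
    exact hIntMono y l1 l2 hy h1 h12
  have hbound : ∀ lam : ℝ, 0 < lam → R lam ≤
      ∫⁻ z in Set.Ioi (0:ℝ), ENNReal.ofReal ((1 - M₀ z) / (z * ZI z)) := by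
    intro lam _
    rw [hR lam, ← hsub]
    refine lintegral_mono_ae ?_
    filter_upwards [ae_restrict_mem measurableSet_Ioi] with y hy
    exact hIntBound y lam hy
  refine ⟨hmono, hbound, ?_⟩
  have hseq : Tendsto (fun n : ℕ => R ((n:ℝ)+1)) atTop
      (𝓝 (∫⁻ z in Set.Ioi (0:ℝ), ENNReal.ofReal ((1 - M₀ z) / (z * ZI z)))) := by
    rw [← hsub]
    have h := lintegral_tendsto_of_tendsto_of_monotone
      (μ := volume.restrict (Set.Ioi (0:ℝ)))
      (f := fun n y => ENNReal.ofReal ((1 - M₀ (SNR * y)) * (GI y ((n:ℝ)+1) / y)))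
      (F := fun y => ENNReal.ofReal ((1 - M₀ (SNR * y)) * ((ZI (SNR * y))⁻¹ / y)))
      (fun n => (hmInt ((n:ℝ)+1)).aemeasurable) ?_ ?_
    · have h2 : (fun n : ℕ => ∫⁻ y in Set.Ioi (0:ℝ),
          ENNReal.ofReal ((1 - M₀ (SNR * y)) * (GI y ((n:ℝ)+1) / y))) =
          fun n : ℕ => R ((n:ℝ)+1) := funext fun n : ℕ => (hR _).symm
      rw [h2] at h
      exact h
    · filter_upwards [ae_restrict_mem measurableSet_Ioi] with y hy
      intro n m hnm
      refine hIntMono y ((n:ℝ)+1) ((m:ℝ)+1) hy (by positivity) ?_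
      have : (n:ℝ) ≤ (m:ℝ) := Nat.cast_le.2 hnm
      linarith
    · filter_upwards [ae_restrict_mem measurableSet_Ioi] with y hy
      exact ENNReal.tendsto_ofReal
        (tendsto_const_nhds.mul ((hGItend y hy).div_const y))
  have hnat : Tendsto (fun n : ℕ => R (n:ℝ)) atTop
      (𝓝 (∫⁻ z in Set.Ioi (0:ℝ), ENNReal.ofReal ((1 - M₀ z) / (z * ZI z)))) := by
    refine (tendsto_add_atTop_iff_nat 1).1 ?_
    refine hseq.congr fun n => congrArg R ?_
    push_cast
    ring
  have hfloor : Tendsto (fun lam : ℝ => R ((⌊lam⌋₊ : ℕ) : ℝ)) atTop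
      (𝓝 (∫⁻ z in Set.Ioi (0:ℝ), ENNReal.ofReal ((1 - M₀ z) / (z * ZI z)))) :=
    hnat.comp tendsto_nat_floor_atTop
  refine tendsto_of_tendsto_of_tendsto_of_le_of_le' hfloor tendsto_const_nhds ?_ ?_
  · filter_upwards [eventually_ge_atTop (1:ℝ)] with lam hlam
    have h1 : (1:ℕ) ≤ ⌊lam⌋₊ := Nat.le_floor (by exact_mod_cast hlam)
    have hpos : (0:ℝ) < ((⌊lam⌋₊ : ℕ) : ℝ) := by exact_mod_cast h1
    exact hmono _ _ hpos (Nat.floor_le (by linarith))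
  · filter_upwards [eventually_gt_atTop (0:ℝ)] with lam hlam
    exact hbound lam hlam
end

section
/- (Corollary 3 and Remark 6(i).) Fix α > 2 and λ > 0. Let X and g be nonnegative random variables with X integrable and E[g^{2/α}] < ∞. Set M₀(z) = E[exp(-z·X)], M_I(z) = E[exp(-z·g)], T_I(z) = z^{2/α}·E[g^{2/α}·γ(1 − 2/α, z·g)], and Z_I(z) = M_I(z) + T_I(z) > 0. For SNR > 0 define R(SNR) = ∫₀^∞ (1 − M₀(SNR·y))·(G_I(y)/y) dy with G_I(y) = Z_I(SNR·y)^{-1} − (α/2)·(y/Z_I(SNR·y))·∫₀^∞ ξ^{α/2−1}·exp(-π·λ·Z_I(SNR·y)·ξ)·exp(-y·ξ^{α/2}) dξ. If ∫₀^∞ (1 − M₀(z))·Z_I(z)^{-(1 + α/2)} dz < ∞, then lim_{SNR→∞} R(SNR) = R^{(SNR∞)} := ∫₀^∞ (1 − M₀(z))/(z·Z_I(z)) dz, a quantity independent of both SNR and the base-station density λ. -/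
open MeasureTheory Real Set Filter
open scoped ENNReal

section Aux

lemma cov_lemma (c : ℝ) (hc : 0 < c) (F : ℝ → ℝ≥0∞) :
    ∫⁻ y in Ioi (0:ℝ), F (c * y) = ENNReal.ofReal c⁻¹ * ∫⁻ z in Ioi (0:ℝ), F z := by
  have hc' : c ≠ 0 := hc.ne'
  set e : ℝ ≃ᵐ ℝ := (Homeomorph.mulLeft₀ c hc').toMeasurableEquiv with he
  have hpre : (fun y => c * y) ⁻¹' (Ioi (0:ℝ)) = Ioi 0 := by
    ext y; simp [mem_Ioi, mul_pos_iff_of_pos_left hc]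
  have h1 : ∫⁻ y in Ioi (0:ℝ), F (c * y) = ∫⁻ z, F z ∂(Measure.map e (volume.restrict (Ioi 0))) := by
    rw [lintegral_map_equiv]
    rfl
  rw [h1]
  have h2 : Measure.map e (volume.restrict (Ioi (0:ℝ)))
      = (ENNReal.ofReal |c⁻¹| • volume).restrict (Ioi 0) := by
    have : Measure.map (e : ℝ → ℝ) volume = ENNReal.ofReal |c⁻¹| • volume := by
      have := Real.map_volume_mul_left hc'
      convert this using 2
      rfl
    rw [← this, Measure.restrict_map e.measurable measurableSet_Ioi,
      show (e : ℝ → ℝ) ⁻¹' (Ioi (0:ℝ)) = Ioi 0 from hpre]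
  rw [h2, Measure.restrict_smul, lintegral_smul_measure, abs_of_pos (by positivity), smul_eq_mul]

lemma lowerGamma_mono_s9 {a : ℝ} (ha : 0 < a) (ha1 : a ≤ 1) : Monotone (lowerGamma a) := by
  intro x x' hxx'
  unfold lowerGamma
  rcases le_or_gt x' 0 with h | h
  · rw [Ioc_eq_empty (by simpa using le_trans hxx' h), Ioc_eq_empty (by simpa using h)]
  · have hint : IntegrableOn (fun t : ℝ => t ^ (a - 1) * Real.exp (-t)) (Ioc 0 x') := by
      have h1 : IntegrableOn (fun t : ℝ => t ^ (a - 1)) (Ioc 0 x') := by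
        have := intervalIntegral.intervalIntegrable_rpow' (a := 0) (b := x')
          (r := a - 1) (by linarith)
        rwa [intervalIntegrable_iff_integrableOn_Ioc_of_le h.le] at this
      refine Integrable.mono h1
        ((measurable_id.pow_const _).mul (measurable_neg.exp)).aestronglyMeasurable ?_
      filter_upwards [ae_restrict_mem measurableSet_Ioc] with t ht
      have ht0 : 0 < t := ht.1
      have hexp : Real.exp (-t) ≤ 1 := Real.exp_le_one_iff.mpr (by linarith)
      have h2 : 0 ≤ t ^ (a - 1) := Real.rpow_nonneg ht0.le _
      rw [Real.norm_eq_abs, Real.norm_eq_abs,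
        abs_of_nonneg (mul_nonneg h2 (Real.exp_pos _).le), abs_of_nonneg h2]
      nlinarith [Real.exp_pos (-t)]
    refine setIntegral_mono_set hint ?_ ?_
    · filter_upwards [ae_restrict_mem measurableSet_Ioc] with t ht
      exact mul_nonneg (Real.rpow_nonneg ht.1.le _) (Real.exp_pos _).le
    · exact HasSubset.Subset.eventuallyLE (Ioc_subset_Ioc_right hxx')

lemma lowerGamma_measurable {a : ℝ} (ha : 0 < a) (ha1 : a ≤ 1) :
    Measurable (lowerGamma a) :=
  (lowerGamma_mono_s9 ha ha1).measurable

end Aux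

/-- Corollary 3 and Remark 6(i): in the interference-limited regime the single-tier
average rate `R(SNR)` converges, as `SNR → ∞`, to
`R^{(SNR∞)} = ∫₀^∞ (1 - M₀(z))/(z Z_I(z)) dz`, a quantity independent of `SNR` and `λ`. -/
theorem average_rate_interference_limited_limit
    {Ω : Type*} [MeasurableSpace Ω] (μ : Measure Ω) [IsProbabilityMeasure μ]
    (α lam : ℝ) (hα : 2 < α) (hlam : 0 < lam)
    (X g : Ω → ℝ) (hX : Measurable X) (hg : Measurable g)
    (hXnn : ∀ ω, 0 ≤ X ω) (hgnn : ∀ ω, 0 ≤ g ω)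
    (hXint : Integrable X μ) (hgint : Integrable (fun ω => g ω ^ (2 / α)) μ)
    (M₀ MI TI ZI : ℝ → ℝ)
    (hM₀ : ∀ z, M₀ z = ∫ ω, Real.exp (-(z * X ω)) ∂μ)
    (hMI : ∀ z, MI z = ∫ ω, Real.exp (-(z * g ω)) ∂μ)
    (hTI : ∀ z, TI z = z ^ (2 / α) * ∫ ω, g ω ^ (2 / α) * lowerGamma (1 - 2 / α) (z * g ω) ∂μ)
    (hZI : ∀ z, ZI z = MI z + TI z)
    (hZpos : ∀ z, 0 < ZI z)
    (GI : ℝ → ℝ → ℝ)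
    (hGI : ∀ y SNR, GI y SNR = (ZI (SNR * y))⁻¹ - (α / 2) * (y / ZI (SNR * y)) *
        ∫ ξ in Set.Ioi (0 : ℝ),
          ξ ^ (α / 2 - 1) * Real.exp (-(π * lam * ZI (SNR * y) * ξ)) *
            Real.exp (-(y * ξ ^ (α / 2))))
    (R : ℝ → ℝ≥0∞)
    (hR : ∀ SNR, R SNR = ∫⁻ y in Set.Ioi (0 : ℝ),
        ENNReal.ofReal ((1 - M₀ (SNR * y)) * (GI y SNR / y)))
    (hfin : (∫⁻ z in Set.Ioi (0 : ℝ),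
        ENNReal.ofReal ((1 - M₀ z) * ZI z ^ (-(1 + α / 2)))) < ⊤) :
    Tendsto R atTop
      (nhds (∫⁻ z in Set.Ioi (0 : ℝ), ENNReal.ofReal ((1 - M₀ z) / (z * ZI z)))) := by
  have hα0 : (0:ℝ) < α := by linarith
  set β : ℝ := α / 2 with hβ
  have hβ1 : 1 ≤ β := by rw [hβ]; linarith
  have hβ0 : 0 < β := by linarith
  -- measurability of M₀ and ZI
  have hM₀meas : Measurable M₀ := by
    have hjm : Measurable fun p : ℝ × Ω => Real.exp (-(p.1 * X p.2)) :=
      ((measurable_fst.mul (hX.comp measurable_snd)).neg).exp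
    have h2 := hjm.stronglyMeasurable.integral_prod_right' (ν := μ)
    have : M₀ = fun z => ∫ ω, Real.exp (-(z * X ω)) ∂μ := funext hM₀
    rw [this]
    exact h2.measurable
  have h2α : 0 < 1 - 2 / α := by
    have : 2 / α < 1 := (div_lt_one hα0).mpr hα
    linarith
  have h2α' : 1 - 2 / α ≤ 1 := by
    have : 0 ≤ 2 / α := by positivity
    linarith
  have hZmeas : Measurable ZI := by
    have hMImeas : Measurable MI := by
      have hjm : Measurable fun p : ℝ × Ω => Real.exp (-(p.1 * g p.2)) :=
        ((measurable_fst.mul (hg.comp measurable_snd)).neg).exp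
      have h2 := hjm.stronglyMeasurable.integral_prod_right' (ν := μ)
      have : MI = fun z => ∫ ω, Real.exp (-(z * g ω)) ∂μ := funext hMI
      rw [this]
      exact h2.measurable
    have hTImeas : Measurable TI := by
      have hjm : Measurable fun p : ℝ × Ω =>
          g p.2 ^ (2 / α) * lowerGamma (1 - 2 / α) (p.1 * g p.2) :=
        ((hg.comp measurable_snd).pow_const _).mul
          ((lowerGamma_measurable h2α h2α').comp
            (measurable_fst.mul (hg.comp measurable_snd)))
      have h2 := hjm.stronglyMeasurable.integral_prod_right' (ν := μ)
      have : TI = fun z =>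
          z ^ (2 / α) * ∫ ω, g ω ^ (2 / α) * lowerGamma (1 - 2 / α) (z * g ω) ∂μ :=
        funext hTI
      rw [this]
      exact (measurable_id.pow_const _).mul h2.measurable
    have : ZI = fun z => MI z + TI z := funext hZI
    rw [this]
    exact hMImeas.add hTImeas
  -- M₀ ≤ 1 on nonneg arguments
  have hM₀le : ∀ z : ℝ, 0 ≤ z → M₀ z ≤ 1 := by
    intro z hz
    rw [hM₀]
    have hmeas : Measurable fun ω => Real.exp (-(z * X ω)) :=
      ((measurable_const.mul hX).neg).exp
    have hbd : ∀ ω, Real.exp (-(z * X ω)) ≤ 1 := fun ω =>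
      Real.exp_le_one_iff.mpr (by nlinarith [hXnn ω])
    have hint : Integrable (fun ω => Real.exp (-(z * X ω))) μ := by
      refine Integrable.mono' (integrable_const 1) hmeas.aestronglyMeasurable ?_
      filter_upwards with ω
      rw [Real.norm_eq_abs, abs_of_pos (Real.exp_pos _)]
      exact hbd ω
    calc ∫ ω, Real.exp (-(z * X ω)) ∂μ ≤ ∫ _, (1:ℝ) ∂μ :=
          integral_mono hint (integrable_const 1) hbd
      _ = 1 := by simp
  set Rinf := ∫⁻ z in Set.Ioi (0:ℝ), ENNReal.ofReal ((1 - M₀ z) / (z * ZI z)) with hRinf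
  set Ifin := ∫⁻ z in Set.Ioi (0:ℝ),
      ENNReal.ofReal ((1 - M₀ z) * ZI z ^ (-(1 + β))) with hIfin
  set K : ℝ := β * Real.Gamma β * (π * lam) ^ (-β) with hK
  have hK0 : 0 ≤ K := by
    have := Real.Gamma_pos_of_pos hβ0
    have hπ : (0:ℝ) < π * lam := by positivity
    positivity
  -- pointwise bounds
  have hbound : ∀ SNR : ℝ, 0 < SNR → ∀ y : ℝ, 0 < y →
      (1 - M₀ (SNR * y)) / (y * ZI (SNR * y)) -
          K * ((1 - M₀ (SNR * y)) * ZI (SNR * y) ^ (-(1 + β)))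
        ≤ (1 - M₀ (SNR * y)) * (GI y SNR / y) ∧
      (1 - M₀ (SNR * y)) * (GI y SNR / y) ≤ (1 - M₀ (SNR * y)) / (y * ZI (SNR * y)) := by
    intro SNR hS y hy
    set z := SNR * y with hz
    set Z := ZI z with hZdef
    have hZ : 0 < Z := hZpos z
    set a := 1 - M₀ z with ha'
    have ha : 0 ≤ a := by
      have := hM₀le z (by positivity)
      simp only [ha']
      linarith
    set J := ∫ ξ in Set.Ioi (0:ℝ),
        ξ ^ (β - 1) * Real.exp (-(π * lam * Z * ξ)) * Real.exp (-(y * ξ ^ β)) with hJ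
    set c : ℝ := π * lam * Z with hc'
    have hc : 0 < c := by positivity
    have hJ0 : 0 ≤ J := by
      rw [hJ]
      refine setIntegral_nonneg measurableSet_Ioi fun ξ hξ => ?_
      have hξ0 : 0 < ξ := hξ
      positivity
    have hintc : IntegrableOn (fun ξ : ℝ => ξ ^ (β - 1) * Real.exp (-(c * ξ)))
        (Set.Ioi 0) := by
      have := integrableOn_rpow_mul_exp_neg_mul_rpow (s := β - 1) (p := 1) (b := c)
        (by linarith) one_pos hc
      refine this.congr_fun (fun ξ hξ => ?_) measurableSet_Ioi
      simp only [Real.rpow_one]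
      ring_nf
    have hJle : J ≤ (1 / c) ^ β * Real.Gamma β := by
      rw [← integral_rpow_mul_exp_neg_mul_Ioi hβ0 hc, hJ]
      have hintJ : IntegrableOn (fun ξ : ℝ =>
          ξ ^ (β - 1) * Real.exp (-(c * ξ)) * Real.exp (-(y * ξ ^ β))) (Set.Ioi 0) := by
        refine Integrable.mono hintc
          (((measurable_id.pow_const _).mul
            ((measurable_const.mul measurable_id).neg.exp)).mul
            ((measurable_const.mul (measurable_id.pow_const _)).neg.exp)).aestronglyMeasurable ?_
        filter_upwards [ae_restrict_mem measurableSet_Ioi] with ξ hξ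
        have hξ0 : 0 < ξ := hξ
        have h1 : Real.exp (-(y * ξ ^ β)) ≤ 1 :=
          Real.exp_le_one_iff.mpr (by nlinarith [Real.rpow_pos_of_pos hξ0 β])
        rw [Real.norm_eq_abs, Real.norm_eq_abs,
          abs_of_nonneg (by positivity), abs_of_nonneg (by positivity)]
        nlinarith [Real.exp_pos (-(c * ξ)), Real.rpow_nonneg hξ0.le (β - 1),
          mul_nonneg (Real.rpow_nonneg hξ0.le (β - 1)) (Real.exp_pos (-(c * ξ))).le]
      refine setIntegral_mono_on hintJ hintc measurableSet_Ioi fun ξ hξ => ?_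
      have hξ0 : 0 < ξ := hξ
      have h1 : Real.exp (-(y * ξ ^ β)) ≤ 1 :=
        Real.exp_le_one_iff.mpr (by nlinarith [Real.rpow_pos_of_pos hξ0 β])
      have h2 : (0:ℝ) ≤ ξ ^ (β - 1) * Real.exp (-(c * ξ)) := by positivity
      nlinarith [Real.exp_pos (-(y * ξ ^ β))]
    have hkey : a * (GI y SNR / y) = a / (y * Z) - a * (β * J / Z) := by
      rw [hGI y SNR]
      simp only [← hz, ← hZdef, ← hβ, ← hc', ← hJ]
      field_simp
    have hsub : β * J / Z ≤ K * Z ^ (-(1 + β)) := by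
      have h2 : (1 / c) ^ β = (π * lam) ^ (-β) * Z ^ (-β) := by
        rw [one_div, ← Real.rpow_neg_one c, ← Real.rpow_mul hc.le,
          show (-1 : ℝ) * β = -β by ring, hc',
          Real.mul_rpow (by positivity) hZ.le]
      have h3 : Z ^ (-(1 + β)) = Z⁻¹ * Z ^ (-β) := by
        rw [show -(1 + β) = -1 + -β by ring, Real.rpow_add hZ, Real.rpow_neg_one]
      have h4 : β * J / Z ≤ β * ((1 / c) ^ β * Real.Gamma β) / Z := by
        gcongr
      calc β * J / Z ≤ β * ((1 / c) ^ β * Real.Gamma β) / Z := h4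
        _ = K * Z ^ (-(1 + β)) := by rw [h2, h3, hK]; field_simp
    constructor
    · rw [hkey]
      have h5 : a * (β * J / Z) ≤ K * (a * Z ^ (-(1 + β))) := by
        calc a * (β * J / Z) ≤ a * (K * Z ^ (-(1 + β))) :=
              mul_le_mul_of_nonneg_left hsub ha
          _ = K * (a * Z ^ (-(1 + β))) := by ring
      have h6 : a / (y * Z) = a / (y * Z) := rfl
      linarith
    · rw [hkey]
      have h7 : 0 ≤ a * (β * J / Z) := by positivity
      have h8 : a / (y * Z) - a * (β * J / Z) ≤ a / (y * Z) := by linarith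
      exact h8
  -- change of variables identities
  have hcovF : ∀ SNR : ℝ, 0 < SNR →
      ∫⁻ y in Set.Ioi (0:ℝ),
        ENNReal.ofReal ((1 - M₀ (SNR * y)) / (y * ZI (SNR * y))) = Rinf := by
    intro SNR hS
    have hcov := cov_lemma SNR hS
      (fun z => ENNReal.ofReal ((1 - M₀ z) / (z * ZI z)))
    have hpt : ∀ y : ℝ, ENNReal.ofReal ((1 - M₀ (SNR * y)) / (y * ZI (SNR * y)))
        = ENNReal.ofReal SNR *
            ENNReal.ofReal ((1 - M₀ (SNR * y)) / ((SNR * y) * ZI (SNR * y))) := by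
      intro y
      rw [← ENNReal.ofReal_mul hS.le]
      congr 1
      rcases eq_or_ne y 0 with rfl | hy
      · simp
      · rw [show (SNR * y) * ZI (SNR * y) = SNR * (y * ZI (SNR * y)) by ring,
          ← mul_div_assoc, mul_div_mul_left _ _ hS.ne']
    rw [lintegral_congr hpt]
    rw [lintegral_const_mul' _ _ ENNReal.ofReal_ne_top, hcov, ← mul_assoc,
      ← ENNReal.ofReal_mul hS.le, mul_inv_cancel₀ hS.ne', ENNReal.ofReal_one, one_mul]
  have hcovV : ∀ SNR : ℝ, 0 < SNR →
      ∫⁻ y in Set.Ioi (0:ℝ),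
          ENNReal.ofReal ((1 - M₀ (SNR * y)) * ZI (SNR * y) ^ (-(1 + β)))
        = ENNReal.ofReal SNR⁻¹ * Ifin := by
    intro SNR hS
    exact cov_lemma SNR hS (fun z => ENNReal.ofReal ((1 - M₀ z) * ZI z ^ (-(1 + β))))
  -- upper bound
  have hub : ∀ SNR : ℝ, 0 < SNR → R SNR ≤ Rinf := by
    intro SNR hS
    rw [hR, ← hcovF SNR hS]
    refine lintegral_mono_ae ?_
    filter_upwards [ae_restrict_mem measurableSet_Ioi] with y hy
    exact ENNReal.ofReal_le_ofReal (hbound SNR hS y hy).2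
  -- lower bound
  have hlb : ∀ SNR : ℝ, 0 < SNR →
      Rinf ≤ R SNR + ENNReal.ofReal K * (ENNReal.ofReal SNR⁻¹ * Ifin) := by
    intro SNR hS
    rw [← hcovF SNR hS, hR]
    have hmeasv : Measurable fun y : ℝ =>
        ENNReal.ofReal (K * ((1 - M₀ (SNR * y)) * ZI (SNR * y) ^ (-(1 + β)))) := by
      refine ENNReal.measurable_ofReal.comp ?_
      exact measurable_const.mul
        (((measurable_const.sub (hM₀meas.comp (measurable_id.const_mul SNR))).mul
          ((hZmeas.comp (measurable_id.const_mul SNR)).pow_const _)))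
    calc ∫⁻ y in Set.Ioi (0:ℝ),
          ENNReal.ofReal ((1 - M₀ (SNR * y)) / (y * ZI (SNR * y)))
        ≤ ∫⁻ y in Set.Ioi (0:ℝ),
            (ENNReal.ofReal ((1 - M₀ (SNR * y)) * (GI y SNR / y)) +
              ENNReal.ofReal (K * ((1 - M₀ (SNR * y)) * ZI (SNR * y) ^ (-(1 + β))))) := by
          refine lintegral_mono_ae ?_
          filter_upwards [ae_restrict_mem measurableSet_Ioi] with y hy
          have hlow := (hbound SNR hS y hy).1
          calc ENNReal.ofReal ((1 - M₀ (SNR * y)) / (y * ZI (SNR * y)))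
              = ENNReal.ofReal
                  (((1 - M₀ (SNR * y)) / (y * ZI (SNR * y)) -
                      K * ((1 - M₀ (SNR * y)) * ZI (SNR * y) ^ (-(1 + β)))) +
                    K * ((1 - M₀ (SNR * y)) * ZI (SNR * y) ^ (-(1 + β)))) := by
                ring_nf
            _ ≤ ENNReal.ofReal ((1 - M₀ (SNR * y)) / (y * ZI (SNR * y)) -
                    K * ((1 - M₀ (SNR * y)) * ZI (SNR * y) ^ (-(1 + β)))) +
                  ENNReal.ofReal
                    (K * ((1 - M₀ (SNR * y)) * ZI (SNR * y) ^ (-(1 + β)))) :=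
                ENNReal.ofReal_add_le
            _ ≤ ENNReal.ofReal ((1 - M₀ (SNR * y)) * (GI y SNR / y)) +
                  ENNReal.ofReal
                    (K * ((1 - M₀ (SNR * y)) * ZI (SNR * y) ^ (-(1 + β)))) := by
                gcongr
      _ = (∫⁻ y in Set.Ioi (0:ℝ),
            ENNReal.ofReal ((1 - M₀ (SNR * y)) * (GI y SNR / y))) +
          ∫⁻ y in Set.Ioi (0:ℝ),
            ENNReal.ofReal (K * ((1 - M₀ (SNR * y)) * ZI (SNR * y) ^ (-(1 + β)))) :=
          lintegral_add_right' _ hmeasv.aemeasurable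
      _ = (∫⁻ y in Set.Ioi (0:ℝ),
            ENNReal.ofReal ((1 - M₀ (SNR * y)) * (GI y SNR / y))) +
          ENNReal.ofReal K * (ENNReal.ofReal SNR⁻¹ * Ifin) := by
          congr 1
          have : ∀ y : ℝ,
              ENNReal.ofReal (K * ((1 - M₀ (SNR * y)) * ZI (SNR * y) ^ (-(1 + β))))
                = ENNReal.ofReal K *
                  ENNReal.ofReal ((1 - M₀ (SNR * y)) * ZI (SNR * y) ^ (-(1 + β))) :=
            fun y => ENNReal.ofReal_mul hK0
          simp_rw [this]
          rw [lintegral_const_mul' _ _ ENNReal.ofReal_ne_top, hcovV SNR hS]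
  -- limit of the error term
  have hεlim : Tendsto (fun S : ℝ => ENNReal.ofReal K * (ENNReal.ofReal S⁻¹ * Ifin))
      atTop (nhds 0) := by
    have h1 : Tendsto (fun S : ℝ => ENNReal.ofReal S⁻¹) atTop (nhds 0) := by
      have := ENNReal.tendsto_ofReal (f := atTop) (tendsto_inv_atTop_zero)
      simpa using this
    have h2 : Tendsto (fun S : ℝ => ENNReal.ofReal S⁻¹ * Ifin) atTop (nhds 0) := by
      simpa using ENNReal.Tendsto.mul_const h1 (Or.inr hfin.ne)
    simpa using ENNReal.Tendsto.const_mul h2 (Or.inr ENNReal.ofReal_ne_top)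
  have hlower : Tendsto
      (fun S : ℝ => Rinf - ENNReal.ofReal K * (ENNReal.ofReal S⁻¹ * Ifin))
      atTop (nhds Rinf) := by
    have := ENNReal.Tendsto.sub (tendsto_const_nhds (x := Rinf) (f := atTop)) hεlim
      (Or.inr (by simp))
    simpa using this
  refine tendsto_of_tendsto_of_tendsto_of_le_of_le' hlower tendsto_const_nhds ?_ ?_
  · filter_upwards [eventually_gt_atTop 0] with S hS
    exact tsub_le_iff_right.mpr (hlb S hS)
  · filter_upwards [eventually_gt_atTop 0] with S hS
    exact hub S hS
end
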